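/- Let V be a finite-dimensional real vector space and let e ∈ ℝ[S_3] be either η or ξ_ν for some ν ∈ ℝ with ν ≠ 1/2. Then the space A'(V) of algebraic covariant derivative curvature tensors on V equals the linear span of {y_{t'}*(U⊗S) : U trilinear with eU = U, S a symmetric bilinear form on V}, and also equals the linear span of {y_{t'}*(U⊗A) : U trilinear with eU = U, A an alternating bilinear form on V}. -/

import Mathlib

/-- Action of a group ring element `a ∈ ℝ[S_r]` on an `r`-multilinear map:
`(aT)(v₁,…,v_r) = Σ_p a(p)·T(v_{p(1)},…,v_{p(r)})`. -/
noncomputable def gact {V : Type} [AddCommGroup V] [Module ℝ V] {r : ℕ}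
    (a : MonoidAlgebra ℝ (Equiv.Perm (Fin r)))
    (T : MultilinearMap ℝ (fun _ : Fin r => V) ℝ) :
    MultilinearMap ℝ (fun _ : Fin r => V) ℝ :=
  ∑ p : Equiv.Perm (Fin r), a.coeff p • T.domDomCongr p
/-- Pointwise action of a group ring element `a ∈ ℝ[S_r]` on a function
`T : V^r → ℝ`: `(aT)(v₁,…,v_r) = Σ_p a(p)·T(v_{p(1)},…,v_{p(r)})`. -/
noncomputable def fact {V : Type} [AddCommGroup V] [Module ℝ V] {r : ℕ}
    (a : MonoidAlgebra ℝ (Equiv.Perm (Fin r)))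
    (T : (Fin r → V) → ℝ) : (Fin r → V) → ℝ :=
  fun v => ∑ p : Equiv.Perm (Fin r), a.coeff p * T (fun i => v (p i))
/-- The star map `a* := Σ_p a(p)·p⁻¹` on the group ring `ℝ[S_r]`. -/
noncomputable def astar {r : ℕ} (a : MonoidAlgebra ℝ (Equiv.Perm (Fin r))) :
    MonoidAlgebra ℝ (Equiv.Perm (Fin r)) :=
  MonoidAlgebra.ofCoeff (Finsupp.equivFunOnFinite.symm (fun p => a.coeff p⁻¹))
/-- The Young symmetrizer `y_{t'} = Σ_{p∈H_{t'}} Σ_{q∈V_{t'}} sign(q)·(p∘q)` of the tableau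
with rows `{1,3,5}`, `{2,4}` (indices `0`-based in `Fin 5`): `H_{t'}` is the group of
permutations mapping `{0,2,4}` to itself and `{1,3}` to itself, and
`V_{t'} = {id, (1 2), (3 4), (1 2)(3 4)}`. -/
noncomputable def ytp : MonoidAlgebra ℝ (Equiv.Perm (Fin 5)) :=
  (∑ p ∈ Finset.univ.filter (fun p : Equiv.Perm (Fin 5) =>
      ({0, 2, 4} : Finset (Fin 5)).image p = {0, 2, 4} ∧
      ({1, 3} : Finset (Fin 5)).image p = {1, 3}),
    MonoidAlgebra.single p (1 : ℝ)) *
  (MonoidAlgebra.single 1 1 - MonoidAlgebra.single (Equiv.swap 0 1) 1 -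
     MonoidAlgebra.single (Equiv.swap 2 3) 1 +
     MonoidAlgebra.single (Equiv.swap 0 1 * Equiv.swap 2 3) 1)
/-- `ξ_ν := (1/3)(id + ν·(2 3) + (1−ν)·(1 2) − ν·(1 2 3) + (ν−1)·(1 3 2) − (1 3)) ∈ ℝ[S_3]`,
with `0`-based indices in `Fin 3`; `finRotate 3` is the cycle `(1 2 3)`. -/
noncomputable def xi (ν : ℝ) : MonoidAlgebra ℝ (Equiv.Perm (Fin 3)) :=
  (1/3 : ℝ) • (MonoidAlgebra.single 1 1 + MonoidAlgebra.single (Equiv.swap 1 2) ν +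
    MonoidAlgebra.single (Equiv.swap 0 1) (1 - ν) - MonoidAlgebra.single (finRotate 3) ν +
    MonoidAlgebra.single (finRotate 3)⁻¹ (ν - 1) - MonoidAlgebra.single (Equiv.swap 0 2) 1)
/-- `η := (1/3)(id − (1 2) − (1 2 3) + (1 3)) ∈ ℝ[S_3]`, with `0`-based indices in `Fin 3`. -/
noncomputable def eta : MonoidAlgebra ℝ (Equiv.Perm (Fin 3)) :=
  (1/3 : ℝ) • (MonoidAlgebra.single 1 1 - MonoidAlgebra.single (Equiv.swap 0 1) 1 -
    MonoidAlgebra.single (finRotate 3) 1 + MonoidAlgebra.single (Equiv.swap 0 2) 1)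

set_option linter.unusedSectionVars false
set_option maxHeartbeats 2000000



section ALL
variable {V : Type} [AddCommGroup V] [Module ℝ V] {r : ℕ}

theorem astar_apply (a : MonoidAlgebra ℝ (Equiv.Perm (Fin r))) (p) : (astar a).coeff p = a.coeff p⁻¹ := rfl

theorem astar_add (a b : MonoidAlgebra ℝ (Equiv.Perm (Fin r))) :
    astar (a + b) = astar a + astar b := by
  ext p; simp only [astar_apply, MonoidAlgebra.coeff_add, Finsupp.add_apply]

theorem astar_sub (a b : MonoidAlgebra ℝ (Equiv.Perm (Fin r))) :
    astar (a - b) = astar a - astar b := by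
  ext p; simp only [astar_apply, MonoidAlgebra.coeff_sub, Finsupp.sub_apply]

theorem astar_single (p : Equiv.Perm (Fin r)) (c : ℝ) :
    astar (MonoidAlgebra.single p c) = MonoidAlgebra.single p⁻¹ c := by
  ext q
  simp only [astar_apply, MonoidAlgebra.single_apply]
  by_cases h : p = q⁻¹
  · simp [h]
  · rw [if_neg h, if_neg]; intro h2; exact h (by rw [← h2]; simp)

theorem fact_add (a b : MonoidAlgebra ℝ (Equiv.Perm (Fin r))) (T : (Fin r → V) → ℝ) (v) :
    fact (a + b) T v = fact a T v + fact b T v := by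
  simp only [fact, show ∀ p, (a+b).coeff p = a.coeff p + b.coeff p from fun _ => rfl, add_mul,
    Finset.sum_add_distrib]

theorem fact_sub (a b : MonoidAlgebra ℝ (Equiv.Perm (Fin r))) (T : (Fin r → V) → ℝ) (v) :
    fact (a - b) T v = fact a T v - fact b T v := by
  simp only [fact, show ∀ p, (a-b).coeff p = a.coeff p - b.coeff p from fun _ => rfl, sub_mul,
    Finset.sum_sub_distrib]

theorem fact_smul (c : ℝ) (a : MonoidAlgebra ℝ (Equiv.Perm (Fin r))) (T : (Fin r → V) → ℝ) (v) :
    fact (c • a) T v = c * fact a T v := by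
  simp only [fact, show ∀ p, (c • a).coeff p = c * a.coeff p from fun _ => rfl, Finset.mul_sum, mul_assoc]

theorem fact_single (p : Equiv.Perm (Fin r)) (c : ℝ) (T : (Fin r → V) → ℝ) (v) :
    fact (MonoidAlgebra.single p c) T v = c * T (fun i => v (p i)) := by
  simp [fact, MonoidAlgebra.single_apply, Finsupp.single_apply, ite_mul]

theorem gact_apply (a : MonoidAlgebra ℝ (Equiv.Perm (Fin r)))
    (T : MultilinearMap ℝ (fun _ : Fin r => V) ℝ) (v) :
    gact a T v = fact a (⇑T) v := by
  simp [gact, fact, MultilinearMap.sum_apply]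

section YS
variable {V : Type} [AddCommGroup V] [Module ℝ V]
theorem argn0 (v : Fin 5 → V) : (fun i => v (((1 : Equiv.Perm (Fin 5)))⁻¹ i)) = ![v 0, v 1, v 2, v 3, v 4] := by
  funext i; fin_cases i <;> exact congrArg v (by decide)
theorem argn1 (v : Fin 5 → V) : (fun i => v (((Equiv.swap 0 1 : Equiv.Perm (Fin 5)))⁻¹ i)) = ![v 1, v 0, v 2, v 3, v 4] := by
  funext i; fin_cases i <;> exact congrArg v (by decide)
theorem argn2 (v : Fin 5 → V) : (fun i => v (((Equiv.swap 2 3 : Equiv.Perm (Fin 5)))⁻¹ i)) = ![v 0, v 1, v 3, v 2, v 4] := by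
  funext i; fin_cases i <;> exact congrArg v (by decide)
theorem argn3 (v : Fin 5 → V) : (fun i => v (((Equiv.swap 0 1 * Equiv.swap 2 3 : Equiv.Perm (Fin 5)))⁻¹ i)) = ![v 1, v 0, v 3, v 2, v 4] := by
  funext i; fin_cases i <;> exact congrArg v (by decide)
theorem argn4 (v : Fin 5 → V) : (fun i => v (((Equiv.swap 1 3 : Equiv.Perm (Fin 5)))⁻¹ i)) = ![v 0, v 3, v 2, v 1, v 4] := by
  funext i; fin_cases i <;> exact congrArg v (by decide)
theorem argn5 (v : Fin 5 → V) : (fun i => v (((Equiv.swap 1 3 * (Equiv.swap 0 1) : Equiv.Perm (Fin 5)))⁻¹ i)) = ![v 1, v 3, v 2, v 0, v 4] := by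
  funext i; fin_cases i <;> exact congrArg v (by decide)
theorem argn6 (v : Fin 5 → V) : (fun i => v (((Equiv.swap 1 3 * (Equiv.swap 2 3) : Equiv.Perm (Fin 5)))⁻¹ i)) = ![v 0, v 2, v 3, v 1, v 4] := by
  funext i; fin_cases i <;> exact congrArg v (by decide)
theorem argn7 (v : Fin 5 → V) : (fun i => v (((Equiv.swap 1 3 * (Equiv.swap 0 1 * Equiv.swap 2 3) : Equiv.Perm (Fin 5)))⁻¹ i)) = ![v 1, v 2, v 3, v 0, v 4] := by
  funext i; fin_cases i <;> exact congrArg v (by decide)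
theorem argn8 (v : Fin 5 → V) : (fun i => v (((Equiv.swap 0 2 : Equiv.Perm (Fin 5)))⁻¹ i)) = ![v 2, v 1, v 0, v 3, v 4] := by
  funext i; fin_cases i <;> exact congrArg v (by decide)
theorem argn9 (v : Fin 5 → V) : (fun i => v (((Equiv.swap 0 2 * (Equiv.swap 0 1) : Equiv.Perm (Fin 5)))⁻¹ i)) = ![v 2, v 0, v 1, v 3, v 4] := by
  funext i; fin_cases i <;> exact congrArg v (by decide)
theorem argn10 (v : Fin 5 → V) : (fun i => v (((Equiv.swap 0 2 * (Equiv.swap 2 3) : Equiv.Perm (Fin 5)))⁻¹ i)) = ![v 3, v 1, v 0, v 2, v 4] := by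
  funext i; fin_cases i <;> exact congrArg v (by decide)
theorem argn11 (v : Fin 5 → V) : (fun i => v (((Equiv.swap 0 2 * (Equiv.swap 0 1 * Equiv.swap 2 3) : Equiv.Perm (Fin 5)))⁻¹ i)) = ![v 3, v 0, v 1, v 2, v 4] := by
  funext i; fin_cases i <;> exact congrArg v (by decide)
theorem argn12 (v : Fin 5 → V) : (fun i => v (((Equiv.swap 0 2 * Equiv.swap 1 3 : Equiv.Perm (Fin 5)))⁻¹ i)) = ![v 2, v 3, v 0, v 1, v 4] := by
  funext i; fin_cases i <;> exact congrArg v (by decide)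
theorem argn13 (v : Fin 5 → V) : (fun i => v (((Equiv.swap 0 2 * Equiv.swap 1 3 * (Equiv.swap 0 1) : Equiv.Perm (Fin 5)))⁻¹ i)) = ![v 2, v 3, v 1, v 0, v 4] := by
  funext i; fin_cases i <;> exact congrArg v (by decide)
theorem argn14 (v : Fin 5 → V) : (fun i => v (((Equiv.swap 0 2 * Equiv.swap 1 3 * (Equiv.swap 2 3) : Equiv.Perm (Fin 5)))⁻¹ i)) = ![v 3, v 2, v 0, v 1, v 4] := by
  funext i; fin_cases i <;> exact congrArg v (by decide)
theorem argn15 (v : Fin 5 → V) : (fun i => v (((Equiv.swap 0 2 * Equiv.swap 1 3 * (Equiv.swap 0 1 * Equiv.swap 2 3) : Equiv.Perm (Fin 5)))⁻¹ i)) = ![v 3, v 2, v 1, v 0, v 4] := by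
  funext i; fin_cases i <;> exact congrArg v (by decide)
theorem argn16 (v : Fin 5 → V) : (fun i => v (((Equiv.swap 0 4 : Equiv.Perm (Fin 5)))⁻¹ i)) = ![v 4, v 1, v 2, v 3, v 0] := by
  funext i; fin_cases i <;> exact congrArg v (by decide)
theorem argn17 (v : Fin 5 → V) : (fun i => v (((Equiv.swap 0 4 * (Equiv.swap 0 1) : Equiv.Perm (Fin 5)))⁻¹ i)) = ![v 4, v 0, v 2, v 3, v 1] := by
  funext i; fin_cases i <;> exact congrArg v (by decide)
theorem argn18 (v : Fin 5 → V) : (fun i => v (((Equiv.swap 0 4 * (Equiv.swap 2 3) : Equiv.Perm (Fin 5)))⁻¹ i)) = ![v 4, v 1, v 3, v 2, v 0] := by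
  funext i; fin_cases i <;> exact congrArg v (by decide)
theorem argn19 (v : Fin 5 → V) : (fun i => v (((Equiv.swap 0 4 * (Equiv.swap 0 1 * Equiv.swap 2 3) : Equiv.Perm (Fin 5)))⁻¹ i)) = ![v 4, v 0, v 3, v 2, v 1] := by
  funext i; fin_cases i <;> exact congrArg v (by decide)
theorem argn20 (v : Fin 5 → V) : (fun i => v (((Equiv.swap 0 4 * Equiv.swap 1 3 : Equiv.Perm (Fin 5)))⁻¹ i)) = ![v 4, v 3, v 2, v 1, v 0] := by
  funext i; fin_cases i <;> exact congrArg v (by decide)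
theorem argn21 (v : Fin 5 → V) : (fun i => v (((Equiv.swap 0 4 * Equiv.swap 1 3 * (Equiv.swap 0 1) : Equiv.Perm (Fin 5)))⁻¹ i)) = ![v 4, v 3, v 2, v 0, v 1] := by
  funext i; fin_cases i <;> exact congrArg v (by decide)
theorem argn22 (v : Fin 5 → V) : (fun i => v (((Equiv.swap 0 4 * Equiv.swap 1 3 * (Equiv.swap 2 3) : Equiv.Perm (Fin 5)))⁻¹ i)) = ![v 4, v 2, v 3, v 1, v 0] := by
  funext i; fin_cases i <;> exact congrArg v (by decide)
theorem argn23 (v : Fin 5 → V) : (fun i => v (((Equiv.swap 0 4 * Equiv.swap 1 3 * (Equiv.swap 0 1 * Equiv.swap 2 3) : Equiv.Perm (Fin 5)))⁻¹ i)) = ![v 4, v 2, v 3, v 0, v 1] := by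
  funext i; fin_cases i <;> exact congrArg v (by decide)
theorem argn24 (v : Fin 5 → V) : (fun i => v (((Equiv.swap 2 4 : Equiv.Perm (Fin 5)))⁻¹ i)) = ![v 0, v 1, v 4, v 3, v 2] := by
  funext i; fin_cases i <;> exact congrArg v (by decide)
theorem argn25 (v : Fin 5 → V) : (fun i => v (((Equiv.swap 2 4 * (Equiv.swap 0 1) : Equiv.Perm (Fin 5)))⁻¹ i)) = ![v 1, v 0, v 4, v 3, v 2] := by
  funext i; fin_cases i <;> exact congrArg v (by decide)
theorem argn26 (v : Fin 5 → V) : (fun i => v (((Equiv.swap 2 4 * (Equiv.swap 2 3) : Equiv.Perm (Fin 5)))⁻¹ i)) = ![v 0, v 1, v 4, v 2, v 3] := by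
  funext i; fin_cases i <;> exact congrArg v (by decide)
theorem argn27 (v : Fin 5 → V) : (fun i => v (((Equiv.swap 2 4 * (Equiv.swap 0 1 * Equiv.swap 2 3) : Equiv.Perm (Fin 5)))⁻¹ i)) = ![v 1, v 0, v 4, v 2, v 3] := by
  funext i; fin_cases i <;> exact congrArg v (by decide)
theorem argn28 (v : Fin 5 → V) : (fun i => v (((Equiv.swap 2 4 * Equiv.swap 1 3 : Equiv.Perm (Fin 5)))⁻¹ i)) = ![v 0, v 3, v 4, v 1, v 2] := by
  funext i; fin_cases i <;> exact congrArg v (by decide)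
theorem argn29 (v : Fin 5 → V) : (fun i => v (((Equiv.swap 2 4 * Equiv.swap 1 3 * (Equiv.swap 0 1) : Equiv.Perm (Fin 5)))⁻¹ i)) = ![v 1, v 3, v 4, v 0, v 2] := by
  funext i; fin_cases i <;> exact congrArg v (by decide)
theorem argn30 (v : Fin 5 → V) : (fun i => v (((Equiv.swap 2 4 * Equiv.swap 1 3 * (Equiv.swap 2 3) : Equiv.Perm (Fin 5)))⁻¹ i)) = ![v 0, v 2, v 4, v 1, v 3] := by
  funext i; fin_cases i <;> exact congrArg v (by decide)
theorem argn31 (v : Fin 5 → V) : (fun i => v (((Equiv.swap 2 4 * Equiv.swap 1 3 * (Equiv.swap 0 1 * Equiv.swap 2 3) : Equiv.Perm (Fin 5)))⁻¹ i)) = ![v 1, v 2, v 4, v 0, v 3] := by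
  funext i; fin_cases i <;> exact congrArg v (by decide)
theorem argn32 (v : Fin 5 → V) : (fun i => v (((Equiv.swap 0 2 * Equiv.swap 2 4 : Equiv.Perm (Fin 5)))⁻¹ i)) = ![v 4, v 1, v 0, v 3, v 2] := by
  funext i; fin_cases i <;> exact congrArg v (by decide)
theorem argn33 (v : Fin 5 → V) : (fun i => v (((Equiv.swap 0 2 * Equiv.swap 2 4 * (Equiv.swap 0 1) : Equiv.Perm (Fin 5)))⁻¹ i)) = ![v 4, v 0, v 1, v 3, v 2] := by
  funext i; fin_cases i <;> exact congrArg v (by decide)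
theorem argn34 (v : Fin 5 → V) : (fun i => v (((Equiv.swap 0 2 * Equiv.swap 2 4 * (Equiv.swap 2 3) : Equiv.Perm (Fin 5)))⁻¹ i)) = ![v 4, v 1, v 0, v 2, v 3] := by
  funext i; fin_cases i <;> exact congrArg v (by decide)
theorem argn35 (v : Fin 5 → V) : (fun i => v (((Equiv.swap 0 2 * Equiv.swap 2 4 * (Equiv.swap 0 1 * Equiv.swap 2 3) : Equiv.Perm (Fin 5)))⁻¹ i)) = ![v 4, v 0, v 1, v 2, v 3] := by
  funext i; fin_cases i <;> exact congrArg v (by decide)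
theorem argn36 (v : Fin 5 → V) : (fun i => v (((Equiv.swap 0 2 * Equiv.swap 2 4 * Equiv.swap 1 3 : Equiv.Perm (Fin 5)))⁻¹ i)) = ![v 4, v 3, v 0, v 1, v 2] := by
  funext i; fin_cases i <;> exact congrArg v (by decide)
theorem argn37 (v : Fin 5 → V) : (fun i => v (((Equiv.swap 0 2 * Equiv.swap 2 4 * Equiv.swap 1 3 * (Equiv.swap 0 1) : Equiv.Perm (Fin 5)))⁻¹ i)) = ![v 4, v 3, v 1, v 0, v 2] := by
  funext i; fin_cases i <;> exact congrArg v (by decide)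
theorem argn38 (v : Fin 5 → V) : (fun i => v (((Equiv.swap 0 2 * Equiv.swap 2 4 * Equiv.swap 1 3 * (Equiv.swap 2 3) : Equiv.Perm (Fin 5)))⁻¹ i)) = ![v 4, v 2, v 0, v 1, v 3] := by
  funext i; fin_cases i <;> exact congrArg v (by decide)
theorem argn39 (v : Fin 5 → V) : (fun i => v (((Equiv.swap 0 2 * Equiv.swap 2 4 * Equiv.swap 1 3 * (Equiv.swap 0 1 * Equiv.swap 2 3) : Equiv.Perm (Fin 5)))⁻¹ i)) = ![v 4, v 2, v 1, v 0, v 3] := by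
  funext i; fin_cases i <;> exact congrArg v (by decide)
theorem argn40 (v : Fin 5 → V) : (fun i => v (((Equiv.swap 0 4 * Equiv.swap 2 4 : Equiv.Perm (Fin 5)))⁻¹ i)) = ![v 2, v 1, v 4, v 3, v 0] := by
  funext i; fin_cases i <;> exact congrArg v (by decide)
theorem argn41 (v : Fin 5 → V) : (fun i => v (((Equiv.swap 0 4 * Equiv.swap 2 4 * (Equiv.swap 0 1) : Equiv.Perm (Fin 5)))⁻¹ i)) = ![v 2, v 0, v 4, v 3, v 1] := by
  funext i; fin_cases i <;> exact congrArg v (by decide)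
theorem argn42 (v : Fin 5 → V) : (fun i => v (((Equiv.swap 0 4 * Equiv.swap 2 4 * (Equiv.swap 2 3) : Equiv.Perm (Fin 5)))⁻¹ i)) = ![v 3, v 1, v 4, v 2, v 0] := by
  funext i; fin_cases i <;> exact congrArg v (by decide)
theorem argn43 (v : Fin 5 → V) : (fun i => v (((Equiv.swap 0 4 * Equiv.swap 2 4 * (Equiv.swap 0 1 * Equiv.swap 2 3) : Equiv.Perm (Fin 5)))⁻¹ i)) = ![v 3, v 0, v 4, v 2, v 1] := by
  funext i; fin_cases i <;> exact congrArg v (by decide)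
theorem argn44 (v : Fin 5 → V) : (fun i => v (((Equiv.swap 0 4 * Equiv.swap 2 4 * Equiv.swap 1 3 : Equiv.Perm (Fin 5)))⁻¹ i)) = ![v 2, v 3, v 4, v 1, v 0] := by
  funext i; fin_cases i <;> exact congrArg v (by decide)
theorem argn45 (v : Fin 5 → V) : (fun i => v (((Equiv.swap 0 4 * Equiv.swap 2 4 * Equiv.swap 1 3 * (Equiv.swap 0 1) : Equiv.Perm (Fin 5)))⁻¹ i)) = ![v 2, v 3, v 4, v 0, v 1] := by
  funext i; fin_cases i <;> exact congrArg v (by decide)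
theorem argn46 (v : Fin 5 → V) : (fun i => v (((Equiv.swap 0 4 * Equiv.swap 2 4 * Equiv.swap 1 3 * (Equiv.swap 2 3) : Equiv.Perm (Fin 5)))⁻¹ i)) = ![v 3, v 2, v 4, v 1, v 0] := by
  funext i; fin_cases i <;> exact congrArg v (by decide)
theorem argn47 (v : Fin 5 → V) : (fun i => v (((Equiv.swap 0 4 * Equiv.swap 2 4 * Equiv.swap 1 3 * (Equiv.swap 0 1 * Equiv.swap 2 3) : Equiv.Perm (Fin 5)))⁻¹ i)) = ![v 3, v 2, v 4, v 0, v 1] := by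
  funext i; fin_cases i <;> exact congrArg v (by decide)
theorem fact_ys (T : (Fin 5 → V) → ℝ) (v : Fin 5 → V) : fact (astar ytp) T v = T ![v 0, v 1, v 2, v 3, v 4] - T ![v 1, v 0, v 2, v 3, v 4] - T ![v 0, v 1, v 3, v 2, v 4] + T ![v 1, v 0, v 3, v 2, v 4] + T ![v 0, v 3, v 2, v 1, v 4] - T ![v 1, v 3, v 2, v 0, v 4] - T ![v 0, v 2, v 3, v 1, v 4] + T ![v 1, v 2, v 3, v 0, v 4] + T ![v 2, v 1, v 0, v 3, v 4] - T ![v 2, v 0, v 1, v 3, v 4] - T ![v 3, v 1, v 0, v 2, v 4] + T ![v 3, v 0, v 1, v 2, v 4] + T ![v 2, v 3, v 0, v 1, v 4] - T ![v 2, v 3, v 1, v 0, v 4] - T ![v 3, v 2, v 0, v 1, v 4] + T ![v 3, v 2, v 1, v 0, v 4] + T ![v 4, v 1, v 2, v 3, v 0] - T ![v 4, v 0, v 2, v 3, v 1] - T ![v 4, v 1, v 3, v 2, v 0] + T ![v 4, v 0, v 3, v 2, v 1] + T ![v 4, v 3, v 2, v 1, v 0] - T ![v 4, v 3, v 2, v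 0, v 1] - T ![v 4, v 2, v 3, v 1, v 0] + T ![v 4, v 2, v 3, v 0, v 1] + T ![v 0, v 1, v 4, v 3, v 2] - T ![v 1, v 0, v 4, v 3, v 2] - T ![v 0, v 1, v 4, v 2, v 3] + T ![v 1, v 0, v 4, v 2, v 3] + T ![v 0, v 3, v 4, v 1, v 2] - T ![v 1, v 3, v 4, v 0, v 2] - T ![v 0, v 2, v 4, v 1, v 3] + T ![v 1, v 2, v 4, v 0, v 3] + T ![v 4, v 1, v 0, v 3, v 2] - T ![v 4, v 0, v 1, v 3, v 2] - T ![v 4, v 1, v 0, v 2, v 3] + T ![v 4, v 0, v 1, v 2, v 3] + T ![v 4, v 3, v 0, v 1, v 2] - T ![v 4, v 3, v 1, v 0, v 2] - T ![v 4, v 2, v 0, v 1, v 3] + T ![v 4, v 2, v 1, v 0, v 3] + T ![v 2, v 1, v 4, v 3, v 0] - T ![v 2, v 0, v 4, v 3, v 1] - T ![v 3, v 1, v 4, v 2, v 0] + T ![v 3, v 0, v 4, v 2, v 1] + T ![v 2, v 3, v 4, v 1, v 0] - T ![v 2, v 3, v 4, v 0, v 1] - T ![v 3, v 2, v 4, v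 1, v 0] + T ![v 3, v 2, v 4, v 0, v 1] := by
  have hH : (Finset.univ.filter (fun p : Equiv.Perm (Fin 5) => ({0, 2, 4} : Finset (Fin 5)).image p = {0, 2, 4} ∧ ({1, 3} : Finset (Fin 5)).image p = {1, 3})) = ({1, Equiv.swap 1 3, Equiv.swap 0 2, Equiv.swap 0 2 * Equiv.swap 1 3, Equiv.swap 0 4, Equiv.swap 0 4 * Equiv.swap 1 3, Equiv.swap 2 4, Equiv.swap 2 4 * Equiv.swap 1 3, Equiv.swap 0 2 * Equiv.swap 2 4, Equiv.swap 0 2 * Equiv.swap 2 4 * Equiv.swap 1 3, Equiv.swap 0 4 * Equiv.swap 2 4, Equiv.swap 0 4 * Equiv.swap 2 4 * Equiv.swap 1 3} : Finset (Equiv.Perm (Fin 5))) := by decide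
  unfold ytp
  rw [hH]
  rw [Finset.sum_insert (by decide), Finset.sum_insert (by decide), Finset.sum_insert (by decide), Finset.sum_insert (by decide), Finset.sum_insert (by decide), Finset.sum_insert (by decide), Finset.sum_insert (by decide), Finset.sum_insert (by decide), Finset.sum_insert (by decide), Finset.sum_insert (by decide), Finset.sum_insert (by decide), Finset.sum_singleton]
  simp only [add_mul, mul_add, mul_sub, MonoidAlgebra.single_mul_single, one_mul, mul_one]
  simp only [astar_add, astar_sub, astar_single]
  simp only [fact_add, fact_sub, fact_single]
  simp only [argn0, argn1, argn2, argn3, argn4, argn5, argn6, argn7, argn8, argn9, argn10, argn11, argn12, argn13, argn14, argn15, argn16, argn17, argn18, argn19, argn20, argn21, argn22, argn23, argn24, argn25, argn26, argn27, argn28, argn29, argn30, argn31, argn32, argn33, argn34, argn35, argn36, argn37, argn38, argn39, argn40, argn41, argn42, argn43, argn44, argn45, argn46, argn47]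
  ring
end YS

section SYM
variable {V : Type} [AddCommGroup V] [Module ℝ V]
theorem vec5 (a0 a1 a2 a3 a4 : V) : ![a0,a1,a2,a3,a4] (0:Fin 5) = a0 ∧ ![a0,a1,a2,a3,a4] (1:Fin 5) = a1 ∧ ![a0,a1,a2,a3,a4] (2:Fin 5) = a2 ∧ ![a0,a1,a2,a3,a4] (3:Fin 5) = a3 ∧ ![a0,a1,a2,a3,a4] (4:Fin 5) = a4 := ⟨rfl,rfl,rfl,rfl,rfl⟩
theorem vec5_0 (a0 a1 a2 a3 a4 : V) : ![a0,a1,a2,a3,a4] (0:Fin 5) = a0 := rfl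
theorem vec5_1 (a0 a1 a2 a3 a4 : V) : ![a0,a1,a2,a3,a4] (1:Fin 5) = a1 := rfl
theorem vec5_2 (a0 a1 a2 a3 a4 : V) : ![a0,a1,a2,a3,a4] (2:Fin 5) = a2 := rfl
theorem vec5_3 (a0 a1 a2 a3 a4 : V) : ![a0,a1,a2,a3,a4] (3:Fin 5) = a3 := rfl
theorem vec5_4 (a0 a1 a2 a3 a4 : V) : ![a0,a1,a2,a3,a4] (4:Fin 5) = a4 := rfl
theorem sym1 (R : (Fin 5 → V) → ℝ) (u w x y z : V) : fact (astar ytp) R ![w, x, y, z, u] = - fact (astar ytp) R ![w, x, z, y, u] := by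
  simp only [fact_ys, vec5_0, vec5_1, vec5_2, vec5_3, vec5_4]; ring
theorem sym2 (R : (Fin 5 → V) → ℝ) (u w x y z : V) : fact (astar ytp) R ![w, x, y, z, u] = fact (astar ytp) R ![y, z, w, x, u] := by
  simp only [fact_ys, vec5_0, vec5_1, vec5_2, vec5_3, vec5_4]; ring
theorem sym3 (R : (Fin 5 → V) → ℝ) (u w x y z : V) : fact (astar ytp) R ![w, x, y, z, u] + fact (astar ytp) R ![w, y, z, x, u] + fact (astar ytp) R ![w, z, x, y, u] = 0 := by
  simp only [fact_ys, vec5_0, vec5_1, vec5_2, vec5_3, vec5_4]; ring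
theorem sym4 (R : (Fin 5 → V) → ℝ) (u w x y z : V) : fact (astar ytp) R ![w, x, y, z, u] + fact (astar ytp) R ![w, x, z, u, y] + fact (astar ytp) R ![w, x, u, y, z] = 0 := by
  simp only [fact_ys, vec5_0, vec5_1, vec5_2, vec5_3, vec5_4]; ring
theorem eigen (R : (Fin 5 → V) → ℝ) (h1 : ∀ u w x y z : V, R ![w, x, y, z, u] = - R ![w, x, z, y, u]) (h2 : ∀ u w x y z : V, R ![w, x, y, z, u] = R ![y, z, w, x, u]) (h3 : ∀ u w x y z : V, R ![w, x, y, z, u] + R ![w, y, z, x, u] + R ![w, z, x, y, u] = 0) (h4 : ∀ u w x y z : V, R ![w, x, y, z, u] + R ![w, x, z, u, y] + R ![w, x, u, y, z] = 0) (a0 a1 a2 a3 a4 : V) :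
    fact (astar ytp) R ![a0,a1,a2,a3,a4] = 24 * R ![a0,a1,a2,a3,a4] := by
  simp only [fact_ys, vec5_0, vec5_1, vec5_2, vec5_3, vec5_4]
  linear_combination - (3) * (h1 (a4) (a0) (a1) (a2) (a3)) - (3) * (h1 (a3) (a0) (a1) (a2) (a4)) + (3) * (h1 (a2) (a0) (a1) (a3) (a4)) + (14) * (h1 (a4) (a0) (a2) (a1) (a3)) + (h1 (a1) (a0) (a2) (a3) (a4)) + (2) * (h1 (a4) (a0) (a3) (a1) (a2)) - (5) * (h1 (a1) (a0) (a3) (a2) (a4)) - (h1 (a1) (a0) (a4) (a2) (a3)) + (h1 (a4) (a1) (a0) (a2) (a3)) + (h1 (a3) (a1) (a0) (a2) (a4)) - (h1 (a2) (a1) (a0) (a3) (a4)) + (2) * (h1 (a4) (a1) (a2) (a0) (a3)) - (4) * (h1 (a3) (a1) (a2) (a0) (a4)) - (h1 (a0) (a1) (a2) (a3) (a4)) - (2) * (h1 (a4) (a1) (a3) (a0) (a2)) + (4) * (h1 (a2) (a1) (a3) (a0) (a4)) + (5) * (h1 (a0) (a1) (a3) (a2) (a4)) + (h1 (a0) (a1)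 (a4) (a2) (a3)) - (h1 (a1) (a2) (a0) (a3) (a4)) + (h1 (a0) (a2) (a1) (a3) (a4)) - (3) * (h1 (a4) (a2) (a3) (a0) (a1)) - (3) * (h1 (a1) (a2) (a3) (a0) (a4)) + (3) * (h1 (a0) (a2) (a3) (a1) (a4)) - (h1 (a3) (a2) (a4) (a0) (a1)) - (h1 (a1) (a2) (a4) (a0) (a3)) + (h1 (a0) (a2) (a4) (a1) (a3)) + (h1 (a1) (a3) (a0) (a2) (a4)) - (h1 (a0) (a3) (a1) (a2) (a4)) + (h1 (a4) (a3) (a2) (a0) (a1)) + (h1 (a1) (a3) (a2) (a0) (a4)) - (h1 (a0) (a3) (a2) (a1) (a4)) + (h1 (a2) (a3) (a4) (a0) (a1)) + (h1 (a1) (a3) (a4) (a0) (a2)) - (h1 (a0) (a3) (a4) (a1) (a2)) + (h1 (a1) (a4) (a0) (a2) (a3)) - (h1 (a0) (a4) (a1) (a2) (a3)) + (h1 (a3) (a4) (a2) (a0) (a1)) + (h1 (a1) (a4) (a2) (a0) (a3)) - (h1 (a0) (a4) (a2) (a1) (a3)) - (h1 (a2) (a4) (a3) (a0) (a1)) - (h1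 (a1) (a4) (a3) (a0) (a2)) + (h1 (a0) (a4) (a3) (a1) (a2)) - (4) * (h2 (a4) (a0) (a1) (a2) (a3)) - (h2 (a3) (a0) (a1) (a2) (a4)) + (2) * (h2 (a4) (a0) (a1) (a3) (a2)) + (h2 (a2) (a0) (a1) (a3) (a4)) + (2) * (h2 (a3) (a0) (a1) (a4) (a2)) - (2) * (h2 (a2) (a0) (a1) (a4) (a3)) - (8) * (h2 (a4) (a0) (a2) (a1) (a3)) + (h2 (a4) (a0) (a2) (a3) (a1)) + (h2 (a1) (a0) (a2) (a3) (a4)) + (h2 (a3) (a0) (a2) (a4) (a1)) - (h2 (a1) (a0) (a2) (a4) (a3)) + (8) * (h2 (a4) (a0) (a3) (a1) (a2)) - (h2 (a4) (a0) (a3) (a2) (a1)) - (h2 (a1) (a0) (a3) (a2) (a4)) - (h2 (a2) (a0) (a3) (a4) (a1)) + (h2 (a1) (a0) (a3) (a4) (a2)) - (4) * (h2 (a3) (a0) (a4) (a1) (a2)) + (4) * (h2 (a2) (a0) (a4) (a1) (a3)) - (3) * (h2 (a1) (a0) (a4) (a2) (a3)) + (h2 (a1) (a0) (a4) (a3) (a2))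 - (2) * (h2 (a4) (a1) (a0) (a2) (a3)) - (h2 (a3) (a1) (a0) (a2) (a4)) + (h2 (a2) (a1) (a0) (a3) (a4)) - (h2 (a4) (a1) (a2) (a3) (a0)) - (h2 (a0) (a1) (a2) (a3) (a4)) - (h2 (a3) (a1) (a2) (a4) (a0)) + (h2 (a0) (a1) (a2) (a4) (a3)) + (h2 (a4) (a1) (a3) (a2) (a0)) + (h2 (a0) (a1) (a3) (a2) (a4)) + (h2 (a2) (a1) (a3) (a4) (a0)) - (h2 (a0) (a1) (a3) (a4) (a2)) + (3) * (h2 (a0) (a1) (a4) (a2) (a3)) - (h2 (a0) (a1) (a4) (a3) (a2)) + (h2 (a1) (a2) (a0) (a3) (a4)) - (h2 (a0) (a2) (a1) (a3) (a4)) + (2) * (h2 (a1) (a2) (a3) (a4) (a0)) - (2) * (h2 (a0) (a2) (a3) (a4) (a1)) + (h2 (a1) (a2) (a4) (a3) (a0)) - (h2 (a0) (a2) (a4) (a3) (a1)) - (16) * (h3 (a4) (a0) (a1) (a2) (a3)) + (4) * (h3 (a3) (a0) (a1) (a2) (a4)) - (4) * (h3 (a2) (a0) (a1) (a3) (a4))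 + (4) * (h3 (a1) (a0) (a2) (a3) (a4)) - (4) * (h3 (a0) (a1) (a2) (a3) (a4)) - (6) * (h4 (a4) (a0) (a2) (a1) (a3)) + (6) * (h4 (a4) (a0) (a3) (a1) (a2)) + (6) * (h4 (a4) (a1) (a2) (a0) (a3)) - (6) * (h4 (a4) (a1) (a3) (a0) (a2))
end SYM

section S3L
variable {V : Type} [AddCommGroup V] [Module ℝ V]
theorem vec3_0 (a0 a1 a2 : V) : ![a0,a1,a2] (0:Fin 3) = a0 := rfl
theorem vec3_1 (a0 a1 a2 : V) : ![a0,a1,a2] (1:Fin 3) = a1 := rfl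
theorem vec3_2 (a0 a1 a2 : V) : ![a0,a1,a2] (2:Fin 3) = a2 := rfl
theorem argm0 (v : Fin 3 → V) : (fun i => v ((1 : Equiv.Perm (Fin 3)) i)) = ![v 0, v 1, v 2] := by
  funext i; fin_cases i <;> exact congrArg v (by decide)
theorem argm1 (v : Fin 3 → V) : (fun i => v ((Equiv.swap 0 1 : Equiv.Perm (Fin 3)) i)) = ![v 1, v 0, v 2] := by
  funext i; fin_cases i <;> exact congrArg v (by decide)
theorem argm2 (v : Fin 3 → V) : (fun i => v ((Equiv.swap 0 2 : Equiv.Perm (Fin 3)) i)) = ![v 2, v 1, v 0] := by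
  funext i; fin_cases i <;> exact congrArg v (by decide)
theorem argm3 (v : Fin 3 → V) : (fun i => v ((Equiv.swap 1 2 : Equiv.Perm (Fin 3)) i)) = ![v 0, v 2, v 1] := by
  funext i; fin_cases i <;> exact congrArg v (by decide)
theorem argm4 (v : Fin 3 → V) : (fun i => v ((finRotate 3 : Equiv.Perm (Fin 3)) i)) = ![v 1, v 2, v 0] := by
  funext i; fin_cases i <;> exact congrArg v (by decide)
theorem argm5 (v : Fin 3 → V) : (fun i => v (((finRotate 3)⁻¹ : Equiv.Perm (Fin 3)) i)) = ![v 2, v 0, v 1] := by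
  funext i; fin_cases i <;> exact congrArg v (by decide)
theorem fact_eta (T : (Fin 3 → V) → ℝ) (v : Fin 3 → V) : fact eta T v = (1/3 : ℝ) * (T ![v 0, v 1, v 2] - T ![v 1, v 0, v 2] - T ![v 1, v 2, v 0] + T ![v 2, v 1, v 0]) := by
  unfold eta
  simp only [fact_smul, fact_add, fact_sub, fact_single, argm0, argm1, argm2, argm3, argm4, argm5]
  ring
theorem fact_xi (ν : ℝ) (T : (Fin 3 → V) → ℝ) (v : Fin 3 → V) : fact (xi ν) T v = (1/3 : ℝ) * ((1:ℝ) * T ![v 0, v 1, v 2] + ν * T ![v 0, v 2, v 1] + (1-ν) * T ![v 1, v 0, v 2] + (-ν) * T ![v 1, v 2, v 0] + (ν-1) * T ![v 2, v 0, v 1] + (-1:ℝ) * T ![v 2, v 1, v 0]) := by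
  unfold xi
  simp only [fact_smul, fact_add, fact_sub, fact_single, argm0, argm1, argm2, argm3, argm4, argm5]
  ring
theorem gact_eq_of_fun {r : ℕ} (a : MonoidAlgebra ℝ (Equiv.Perm (Fin r))) (T S : MultilinearMap ℝ (fun _ : Fin r => V) ℝ) (h : ∀ v, fact a (⇑T) v = fact a (⇑S) v) : gact a T = gact a S := by
  apply MultilinearMap.ext; intro v; rw [gact_apply, gact_apply, h]
theorem vec3_eta (v : Fin 3 → V) : ![v 0, v 1, v 2] = v := by
  funext i; fin_cases i <;> rfl
theorem vec5_eta (v : Fin 5 → V) : ![v 0, v 1, v 2, v 3, v 4] = v := by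
  funext i; fin_cases i <;> rfl
theorem idem_eta (U : MultilinearMap ℝ (fun _ : Fin 3 => V) ℝ) :
    gact eta (gact eta U) = gact eta U := by
  apply MultilinearMap.ext; intro v
  rw [gact_apply]
  simp only [fact_eta, gact_apply, vec3_0, vec3_1, vec3_2, vec3_eta]
  ring
theorem idem_xi (ν : ℝ) (U : MultilinearMap ℝ (fun _ : Fin 3 => V) ℝ) :
    gact (xi ν) (gact (xi ν) U) = gact (xi ν) U := by
  apply MultilinearMap.ext; intro v
  rw [gact_apply]
  simp only [fact_xi, gact_apply, vec3_0, vec3_1, vec3_2, vec3_eta]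
  ring
end S3L

section TENS
variable {V : Type} [AddCommGroup V] [Module ℝ V]

/-- bilinear map as 2-multilinear map -/
noncomputable def bil2 (S : V →ₗ[ℝ] V →ₗ[ℝ] ℝ) : MultilinearMap ℝ (fun _ : Fin 2 => V) ℝ where
  toFun v := S (v 0) (v 1)
  map_update_add' v i x y := by
    fin_cases i <;> simp [Function.update_apply]
  map_update_smul' v i c x := by
    fin_cases i <;> simp [Function.update_apply]

/-- U ⊗ S as a 5-multilinear map -/
noncomputable def tensorUS (U : MultilinearMap ℝ (fun _ : Fin 3 => V) ℝ)
    (S : V →ₗ[ℝ] V →ₗ[ℝ] ℝ) : MultilinearMap ℝ (fun _ : Fin 5 => V) ℝ :=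
  (LinearMap.mul' ℝ ℝ).compMultilinearMap
    ((U.domCoprod (bil2 S)).domDomCongr finSumFinEquiv)

theorem tensorUS_apply (U : MultilinearMap ℝ (fun _ : Fin 3 => V) ℝ)
    (S : V →ₗ[ℝ] V →ₗ[ℝ] ℝ) (v : Fin 5 → V) :
    tensorUS U S v = U ![v 0, v 1, v 2] * S (v 3) (v 4) := by
  have e1 : (fun i : Fin 3 => v ((finSumFinEquiv : Fin 3 ⊕ Fin 2 ≃ Fin 5) (Sum.inl i))) = ![v 0, v 1, v 2] := by
    funext i; fin_cases i <;> exact congrArg v (by decide)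
  have h3 : v ((finSumFinEquiv : Fin 3 ⊕ Fin 2 ≃ Fin 5) (Sum.inr (0 : Fin 2))) = v 3 := congrArg v (by decide)
  have h4 : v ((finSumFinEquiv : Fin 3 ⊕ Fin 2 ≃ Fin 5) (Sum.inr (1 : Fin 2))) = v 4 := congrArg v (by decide)
  simp only [tensorUS, LinearMap.compMultilinearMap_apply, MultilinearMap.domDomCongr_apply,
    MultilinearMap.domCoprod_apply, LinearMap.mul'_apply, bil2, MultilinearMap.coe_mk, e1, h3, h4]

noncomputable def U3 (f g h : V →ₗ[ℝ] ℝ) : MultilinearMap ℝ (fun _ : Fin 3 => V) ℝ :=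
  (MultilinearMap.mkPiAlgebra ℝ (Fin 3) ℝ).compLinearMap ![f, g, h]

theorem U3_apply (f g h : V →ₗ[ℝ] ℝ) (v : Fin 3 → V) :
    U3 f g h v = f (v 0) * (g (v 1) * h (v 2)) := by
  simp only [U3, MultilinearMap.compLinearMap_apply, MultilinearMap.mkPiAlgebra_apply,
    Fin.prod_univ_three]
  norm_num [mul_assoc, Matrix.cons_val_two, Matrix.tail_cons, Matrix.head_cons]

noncomputable def G5 (φ : Fin 5 → (V →ₗ[ℝ] ℝ)) : MultilinearMap ℝ (fun _ : Fin 5 => V) ℝ :=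
  (MultilinearMap.mkPiAlgebra ℝ (Fin 5) ℝ).compLinearMap φ

theorem G5_apply (φ : Fin 5 → (V →ₗ[ℝ] ℝ)) (v : Fin 5 → V) :
    G5 φ v = φ 0 (v 0) * (φ 1 (v 1) * (φ 2 (v 2) * (φ 3 (v 3) * φ 4 (v 4)))) := by
  simp only [G5, MultilinearMap.compLinearMap_apply, MultilinearMap.mkPiAlgebra_apply,
    Fin.prod_univ_five]
  ring

noncomputable def Ssym (f g : V →ₗ[ℝ] ℝ) : V →ₗ[ℝ] V →ₗ[ℝ] ℝ :=
  (1/2 : ℝ) • (f.smulRight g + g.smulRight f)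

noncomputable def Salt (f g : V →ₗ[ℝ] ℝ) : V →ₗ[ℝ] V →ₗ[ℝ] ℝ :=
  (1/2 : ℝ) • (f.smulRight g - g.smulRight f)

theorem Ssym_apply (f g : V →ₗ[ℝ] ℝ) (x y : V) :
    Ssym f g x y = (1/2 : ℝ) * (f x * g y + g x * f y) := by
  simp [Ssym, mul_add]

theorem Salt_apply (f g : V →ₗ[ℝ] ℝ) (x y : V) :
    Salt f g x y = (1/2 : ℝ) * (f x * g y - g x * f y) := by
  simp [Salt, mul_sub]

theorem Ssym_symm (f g : V →ₗ[ℝ] ℝ) (x y : V) : Ssym f g x y = Ssym f g y x := by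
  rw [Ssym_apply, Ssym_apply]; ring

theorem Salt_alt (f g : V →ₗ[ℝ] ℝ) (x y : V) : Salt f g x y = - Salt f g y x := by
  rw [Salt_apply, Salt_apply]; ring

theorem gact_add {r : ℕ} (a : MonoidAlgebra ℝ (Equiv.Perm (Fin r)))
    (T S : MultilinearMap ℝ (fun _ : Fin r => V) ℝ) :
    gact a (T + S) = gact a T + gact a S := by
  apply MultilinearMap.ext; intro v
  simp only [MultilinearMap.add_apply, gact_apply, fact]
  rw [← Finset.sum_add_distrib]
  apply Finset.sum_congr rfl; intro p _
  simp [MultilinearMap.add_apply, mul_add]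

theorem gact_smul {r : ℕ} (a : MonoidAlgebra ℝ (Equiv.Perm (Fin r))) (c : ℝ)
    (T : MultilinearMap ℝ (fun _ : Fin r => V) ℝ) :
    gact a (c • T) = c • gact a T := by
  apply MultilinearMap.ext; intro v
  simp only [MultilinearMap.smul_apply, gact_apply, fact, smul_eq_mul, Finset.mul_sum]
  apply Finset.sum_congr rfl; intro p _
  ring

theorem gact_sum {r : ℕ} {ι : Type*} (a : MonoidAlgebra ℝ (Equiv.Perm (Fin r)))
    (s : Finset ι) (f : ι → MultilinearMap ℝ (fun _ : Fin r => V) ℝ) :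
    gact a (∑ j ∈ s, f j) = ∑ j ∈ s, gact a (f j) := by
  classical
  induction s using Finset.cons_induction with
  | empty =>
    apply MultilinearMap.ext; intro v
    simp [gact_apply, fact]
  | cons j s hj ih =>
    rw [Finset.sum_cons, Finset.sum_cons, gact_add, ih]
end TENS

section DECOMP
variable {V : Type} [AddCommGroup V] [Module ℝ V] [FiniteDimensional ℝ V]

theorem decomp (R : MultilinearMap ℝ (fun _ : Fin 5 => V) ℝ) :
    R = ∑ j : Fin 5 → Fin (Module.finrank ℝ V),
      R (fun i => (Module.finBasis ℝ V) (j i)) • G5 (fun i => (Module.finBasis ℝ V).coord (j i)) := by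
  set b := Module.finBasis ℝ V with hb
  apply Module.Basis.ext_multilinear (fun _ => b)
  intro k
  rw [MultilinearMap.sum_apply]
  rw [Finset.sum_eq_single k]
  · simp only [MultilinearMap.smul_apply, smul_eq_mul, G5_apply, Module.Basis.coord_apply,
      Module.Basis.repr_self, Finsupp.single_eq_same]
    ring
  · intro j _ hjk
    obtain ⟨i, hi⟩ := Function.ne_iff.mp hjk
    have : G5 (fun i => b.coord (j i)) (fun i => b (k i)) = 0 := by
      simp only [G5, MultilinearMap.compLinearMap_apply, MultilinearMap.mkPiAlgebra_apply]
      apply Finset.prod_eq_zero (Finset.mem_univ i)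
      simp only [Module.Basis.coord_apply, Module.Basis.repr_self]
      exact Finsupp.single_eq_of_ne' (fun h => hi h.symm)
    rw [MultilinearMap.smul_apply, this, smul_zero]
  · intro hk; exact absurd (Finset.mem_univ k) hk
end DECOMP

section KEY
variable {V : Type} [AddCommGroup V] [Module ℝ V]
theorem key_eta_ss (φ : Fin 5 → V →ₗ[ℝ] ℝ) :
    gact (astar ytp) (G5 φ) = (3/4 : ℝ) • (gact (astar ytp) (tensorUS (gact eta (U3 (φ 0) (φ 2) (φ 1))) (Ssym (φ 3) (φ 4)))) - (9/4 : ℝ) • (gact (astar ytp) (tensorUS (gact eta (U3 (φ 0) (φ 3) (φ 1))) (Ssym (φ 2) (φ 4)))) + (3/4 : ℝ) • (gact (astar ytp) (tensorUS (gact eta (U3 (φ 0) (φ 4) (φ 1))) (Ssym (φ 2) (φ 3)))) := by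
  apply MultilinearMap.ext; intro v
  simp only [MultilinearMap.sub_apply, MultilinearMap.add_apply, MultilinearMap.smul_apply, smul_eq_mul, gact_apply]
  simp only [fact_ys]
  simp only [G5_apply, tensorUS_apply, gact_apply, fact_eta, U3_apply, Ssym_apply, Salt_apply, vec5_0, vec5_1, vec5_2, vec5_3, vec5_4, vec3_0, vec3_1, vec3_2]
  ring
theorem key_eta_sa (φ : Fin 5 → V →ₗ[ℝ] ℝ) :
    gact (astar ytp) (G5 φ) = (3/2 : ℝ) • (gact (astar ytp) (tensorUS (gact eta (U3 (φ 0) (φ 1) (φ 2))) (Salt (φ 3) (φ 4)))) - (1 : ℝ) • (gact (astar ytp) (tensorUS (gact eta (U3 (φ 0) (φ 1) (φ 3))) (Salt (φ 2) (φ 4)))) - (1 : ℝ) • (gact (astar ytp) (tensorUS (gact eta (U3 (φ 0) (φ 2) (φ 1))) (Salt (φ 3) (φ 4)))) + (1/2 : ℝ) • (gact (astar ytp) (tensorUS (gact eta (U3 (φ 0) (φ 3) (φ 1))) (Salt (φ 2) (φ 4)))) + (1/2 : ℝ) • (gact (astar ytp) (tensorUS (gact eta (U3 (φ 0) (φ 2)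 (φ 3))) (Salt (φ 1) (φ 4)))) := by
  apply MultilinearMap.ext; intro v
  simp only [MultilinearMap.sub_apply, MultilinearMap.add_apply, MultilinearMap.smul_apply, smul_eq_mul, gact_apply]
  simp only [fact_ys]
  simp only [G5_apply, tensorUS_apply, gact_apply, fact_eta, U3_apply, Ssym_apply, Salt_apply, vec5_0, vec5_1, vec5_2, vec5_3, vec5_4, vec3_0, vec3_1, vec3_2]
  ring
theorem key_xi_ss (ν : ℝ) (φ : Fin 5 → V →ₗ[ℝ] ℝ) :
    (2*ν - 1) • gact (astar ytp) (G5 φ) = (3/2 : ℝ) • (gact (astar ytp) (tensorUS (gact (xi ν) (U3 (φ 0) (φ 1) (φ 2))) (Ssym (φ 3) (φ 4)))) - (9/2 : ℝ) • (gact (astar ytp) (tensorUS (gact (xi ν) (U3 (φ 0) (φ 1) (φ 3))) (Ssym (φ 2) (φ 4)))) + (3/2 : ℝ) • (gact (astar ytp) (tensorUS (gact (xi ν) (U3 (φ 0) (φ 1) (φ 4))) (Ssym (φ 2) (φ 3)))) := by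
  apply MultilinearMap.ext; intro v
  simp only [MultilinearMap.sub_apply, MultilinearMap.add_apply, MultilinearMap.smul_apply, smul_eq_mul, gact_apply]
  simp only [fact_ys]
  simp only [G5_apply, tensorUS_apply, gact_apply, fact_xi, U3_apply, Ssym_apply, Salt_apply, vec5_0, vec5_1, vec5_2, vec5_3, vec5_4, vec3_0, vec3_1, vec3_2]
  ring
theorem key_xi_sa (ν : ℝ) (φ : Fin 5 → V →ₗ[ℝ] ℝ) :
    (2*ν - 1) • gact (astar ytp) (G5 φ) = (2 : ℝ) • (gact (astar ytp) (tensorUS (gact (xi ν) (U3 (φ 0) (φ 2) (φ 1))) (Salt (φ 3) (φ 4)))) - (1 : ℝ) • (gact (astar ytp) (tensorUS (gact (xi ν) (U3 (φ 0) (φ 1) (φ 2))) (Salt (φ 3) (φ 4)))) - (1 : ℝ) • (gact (astar ytp) (tensorUS (gact (xi ν) (U3 (φ 0) (φ 3) (φ 1))) (Salt (φ 2) (φ 4)))) + (1 : ℝ) • (gact (astar ytp) (tensorUS (gact (xi ν) (U3 (φ 0) (φ 2) (φ 3))) (Salt (φ 1) (φ 4)))) := by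
  apply MultilinearMap.ext; intro v
  simp only [MultilinearMap.sub_apply, MultilinearMap.add_apply, MultilinearMap.smul_apply, smul_eq_mul, gact_apply]
  simp only [fact_ys]
  simp only [G5_apply, tensorUS_apply, gact_apply, fact_xi, U3_apply, Ssym_apply, Salt_apply, vec5_0, vec5_1, vec5_2, vec5_3, vec5_4, vec3_0, vec3_1, vec3_2]
  ring
end KEY

section ASM
variable {V : Type} [AddCommGroup V] [Module ℝ V]

noncomputable def Asub (V : Type) [AddCommGroup V] [Module ℝ V] :
    Submodule ℝ (MultilinearMap ℝ (fun _ : Fin 5 => V) ℝ) where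
  carrier := {R : MultilinearMap ℝ (fun _ : Fin 5 => V) ℝ |
      (∀ u w x y z : V, R ![w, x, y, z, u] = - R ![w, x, z, y, u]) ∧
      (∀ u w x y z : V, R ![w, x, y, z, u] = R ![y, z, w, x, u]) ∧
      (∀ u w x y z : V,
        R ![w, x, y, z, u] + R ![w, y, z, x, u] + R ![w, z, x, y, u] = 0) ∧
      (∀ u w x y z : V,
        R ![w, x, y, z, u] + R ![w, x, z, u, y] + R ![w, x, u, y, z] = 0)}
  add_mem' := by
    rintro a b ⟨a1, a2, a3, a4⟩ ⟨b1, b2, b3, b4⟩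
    refine ⟨fun u w x y z => ?_, fun u w x y z => ?_, fun u w x y z => ?_, fun u w x y z => ?_⟩ <;>
      simp only [MultilinearMap.add_apply]
    · linear_combination a1 u w x y z + b1 u w x y z
    · linear_combination a2 u w x y z + b2 u w x y z
    · linear_combination a3 u w x y z + b3 u w x y z
    · linear_combination a4 u w x y z + b4 u w x y z
  zero_mem' := by
    refine ⟨fun u w x y z => ?_, fun u w x y z => ?_, fun u w x y z => ?_, fun u w x y z => ?_⟩ <;>
      simp
  smul_mem' := by
    rintro c R ⟨h1, h2, h3, h4⟩
    refine ⟨fun u w x y z => ?_, fun u w x y z => ?_, fun u w x y z => ?_, fun u w x y z => ?_⟩ <;>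
      simp only [MultilinearMap.smul_apply, smul_eq_mul]
    · linear_combination c * h1 u w x y z
    · linear_combination c * h2 u w x y z
    · linear_combination c * h3 u w x y z
    · linear_combination c * h4 u w x y z

theorem span_sub_A (gen : Set (MultilinearMap ℝ (fun _ : Fin 5 => V) ℝ))
    (hgen : ∀ T ∈ gen, ∃ F : (Fin 5 → V) → ℝ, ∀ v, T v = fact (astar ytp) F v) :
    (Submodule.span ℝ gen : Set (MultilinearMap ℝ (fun _ : Fin 5 => V) ℝ)) ⊆ (Asub V : Set _) := by
  intro T hT
  refine Submodule.span_le.mpr ?_ hT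
  rintro T' hT'
  obtain ⟨F, hF⟩ := hgen T' hT'
  refine ⟨fun u w x y z => ?_, fun u w x y z => ?_, fun u w x y z => ?_, fun u w x y z => ?_⟩
  · rw [hF, hF]; exact sym1 F u w x y z
  · rw [hF, hF]; exact sym2 F u w x y z
  · rw [hF, hF, hF]; exact sym3 F u w x y z
  · rw [hF, hF, hF]; exact sym4 F u w x y z

theorem A_sub_span [FiniteDimensional ℝ V]
    (gen : Set (MultilinearMap ℝ (fun _ : Fin 5 => V) ℝ))
    (hkey : ∀ φ : Fin 5 → (V →ₗ[ℝ] ℝ), gact (astar ytp) (G5 φ) ∈ Submodule.span ℝ gen)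
    (R : MultilinearMap ℝ (fun _ : Fin 5 => V) ℝ) (hR : R ∈ (Asub V : Set _)) :
    R ∈ Submodule.span ℝ gen := by
  obtain ⟨h1, h2, h3, h4⟩ := hR
  have h24 : gact (astar ytp) R = (24 : ℝ) • R := by
    apply MultilinearMap.ext; intro v
    rw [gact_apply, MultilinearMap.smul_apply, smul_eq_mul]
    have := eigen (⇑R) h1 h2 h3 h4 (v 0) (v 1) (v 2) (v 3) (v 4)
    rwa [vec5_eta v] at this
  have hRR : R = (24 : ℝ)⁻¹ • gact (astar ytp) R := by
    rw [h24, smul_smul]; norm_num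
  have hgd : gact (astar ytp) R = ∑ j : Fin 5 → Fin (Module.finrank ℝ V),
      R (fun i => (Module.finBasis ℝ V) (j i)) •
        gact (astar ytp) (G5 (fun i => (Module.finBasis ℝ V).coord (j i))) := by
    conv_lhs => rw [decomp R]
    rw [gact_sum]
    exact Finset.sum_congr rfl fun j _ => gact_smul _ _ _
  rw [hRR, hgd]
  exact Submodule.smul_mem _ _ (Submodule.sum_mem _ fun j _ =>
    Submodule.smul_mem _ _ (hkey _))

theorem tensor_mem_gen_ss (e3 : MonoidAlgebra ℝ (Equiv.Perm (Fin 3)))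
    (hidem : ∀ U : MultilinearMap ℝ (fun _ : Fin 3 => V) ℝ, gact e3 (gact e3 U) = gact e3 U)
    (f g h s t : V →ₗ[ℝ] ℝ) :
    gact (astar ytp) (tensorUS (gact e3 (U3 f g h)) (Ssym s t)) ∈
      {T : MultilinearMap ℝ (fun _ : Fin 5 => V) ℝ |
        ∃ (U : MultilinearMap ℝ (fun _ : Fin 3 => V) ℝ) (S : V →ₗ[ℝ] V →ₗ[ℝ] ℝ),
          gact e3 U = U ∧ (∀ x y : V, S x y = S y x) ∧
          ∀ v : Fin 5 → V,
            T v = fact (astar ytp) (fun v' => U ![v' 0, v' 1, v' 2] * S (v' 3) (v' 4)) v} := by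
  refine ⟨gact e3 (U3 f g h), Ssym s t, hidem _, Ssym_symm s t, fun v => ?_⟩
  rw [gact_apply]
  have he : ⇑(tensorUS (gact e3 (U3 f g h)) (Ssym s t)) =
      fun v' => (gact e3 (U3 f g h)) ![v' 0, v' 1, v' 2] * (Ssym s t) (v' 3) (v' 4) :=
    funext fun v' => tensorUS_apply _ _ v'
  rw [he]

theorem tensor_mem_gen_sa (e3 : MonoidAlgebra ℝ (Equiv.Perm (Fin 3)))
    (hidem : ∀ U : MultilinearMap ℝ (fun _ : Fin 3 => V) ℝ, gact e3 (gact e3 U) = gact e3 U)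
    (f g h s t : V →ₗ[ℝ] ℝ) :
    gact (astar ytp) (tensorUS (gact e3 (U3 f g h)) (Salt s t)) ∈
      {T : MultilinearMap ℝ (fun _ : Fin 5 => V) ℝ |
        ∃ (U : MultilinearMap ℝ (fun _ : Fin 3 => V) ℝ) (A : V →ₗ[ℝ] V →ₗ[ℝ] ℝ),
          gact e3 U = U ∧ (∀ x y : V, A x y = - A y x) ∧
          ∀ v : Fin 5 → V,
            T v = fact (astar ytp) (fun v' => U ![v' 0, v' 1, v' 2] * A (v' 3) (v' 4)) v} := by
  refine ⟨gact e3 (U3 f g h), Salt s t, hidem _, Salt_alt s t, fun v => ?_⟩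
  rw [gact_apply]
  have he : ⇑(tensorUS (gact e3 (U3 f g h)) (Salt s t)) =
      fun v' => (gact e3 (U3 f g h)) ![v' 0, v' 1, v' 2] * (Salt s t) (v' 3) (v' 4) :=
    funext fun v' => tensorUS_apply _ _ v'
  rw [he]

end ASM

section HKEY
variable {V : Type} [AddCommGroup V] [Module ℝ V]
theorem hkey_eta_ss (φ : Fin 5 → (V →ₗ[ℝ] ℝ)) :
    gact (astar ytp) (G5 φ) ∈ Submodule.span ℝ {T : MultilinearMap ℝ (fun _ : Fin 5 => V) ℝ |
      ∃ (U : MultilinearMap ℝ (fun _ : Fin 3 => V) ℝ) (S : V →ₗ[ℝ] V →ₗ[ℝ] ℝ),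
        gact eta U = U ∧ (∀ x y : V, S x y = S y x) ∧
        ∀ v : Fin 5 → V,
          T v = fact (astar ytp) (fun v' => U ![v' 0, v' 1, v' 2] * S (v' 3) (v' 4)) v} := by
  rw [key_eta_ss φ]
  exact Submodule.add_mem _ (Submodule.sub_mem _ (Submodule.smul_mem _ _ (Submodule.subset_span (tensor_mem_gen_ss eta idem_eta _ _ _ _ _))) (Submodule.smul_mem _ _ (Submodule.subset_span (tensor_mem_gen_ss eta idem_eta _ _ _ _ _)))) (Submodule.smul_mem _ _ (Submodule.subset_span (tensor_mem_gen_ss eta idem_eta _ _ _ _ _)))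
theorem hkey_xi_ss (ν : ℝ) (hν : ν ≠ 1/2) (φ : Fin 5 → (V →ₗ[ℝ] ℝ)) :
    gact (astar ytp) (G5 φ) ∈ Submodule.span ℝ {T : MultilinearMap ℝ (fun _ : Fin 5 => V) ℝ |
      ∃ (U : MultilinearMap ℝ (fun _ : Fin 3 => V) ℝ) (S : V →ₗ[ℝ] V →ₗ[ℝ] ℝ),
        gact (xi ν) U = U ∧ (∀ x y : V, S x y = S y x) ∧
        ∀ v : Fin 5 → V,
          T v = fact (astar ytp) (fun v' => U ![v' 0, v' 1, v' 2] * S (v' 3) (v' 4)) v} := by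
  have h2 : (2*ν - 1) ≠ 0 := fun h => hν (by linarith)
  have hcomb : gact (astar ytp) (G5 φ) = (2*ν - 1)⁻¹ • ((3/2 : ℝ) • (gact (astar ytp) (tensorUS (gact (xi ν) (U3 (φ 0) (φ 1) (φ 2))) (Ssym (φ 3) (φ 4)))) - (9/2 : ℝ) • (gact (astar ytp) (tensorUS (gact (xi ν) (U3 (φ 0) (φ 1) (φ 3))) (Ssym (φ 2) (φ 4)))) + (3/2 : ℝ) • (gact (astar ytp) (tensorUS (gact (xi ν) (U3 (φ 0) (φ 1) (φ 4))) (Ssym (φ 2) (φ 3))))) := by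
    rw [← key_xi_ss ν φ, inv_smul_smul₀ h2]
  rw [hcomb]
  exact Submodule.smul_mem _ _ (Submodule.add_mem _ (Submodule.sub_mem _ (Submodule.smul_mem _ _ (Submodule.subset_span (tensor_mem_gen_ss (xi ν) (idem_xi ν) _ _ _ _ _))) (Submodule.smul_mem _ _ (Submodule.subset_span (tensor_mem_gen_ss (xi ν) (idem_xi ν) _ _ _ _ _)))) (Submodule.smul_mem _ _ (Submodule.subset_span (tensor_mem_gen_ss (xi ν) (idem_xi ν) _ _ _ _ _))))
theorem hkey_eta_sa (φ : Fin 5 → (V →ₗ[ℝ] ℝ)) :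
    gact (astar ytp) (G5 φ) ∈ Submodule.span ℝ {T : MultilinearMap ℝ (fun _ : Fin 5 => V) ℝ |
      ∃ (U : MultilinearMap ℝ (fun _ : Fin 3 => V) ℝ) (A : V →ₗ[ℝ] V →ₗ[ℝ] ℝ),
        gact eta U = U ∧ (∀ x y : V, A x y = - A y x) ∧
        ∀ v : Fin 5 → V,
          T v = fact (astar ytp) (fun v' => U ![v' 0, v' 1, v' 2] * A (v' 3) (v' 4)) v} := by
  rw [key_eta_sa φ]
  exact Submodule.add_mem _ (Submodule.add_mem _ (Submodule.sub_mem _ (Submodule.sub_mem _ (Submodule.smul_mem _ _ (Submodule.subset_span (tensor_mem_gen_sa eta idem_eta _ _ _ _ _))) (Submodule.smul_mem _ _ (Submodule.subset_span (tensor_mem_gen_sa eta idem_eta _ _ _ _ _)))) (Submodule.smul_mem _ _ (Submodule.subset_span (tensor_mem_gen_sa eta idem_eta _ _ _ _ _)))) (Submodule.smul_mem _ _ (Submodule.subset_span (tensor_mem_gen_sa eta idem_eta _ _ _ _ _)))) (Submodule.smul_mem _ _ (Submodule.subset_span (tensor_mem_gen_sa eta idem_eta _ _ _ _ _)))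
theorem hkey_xi_sa (ν : ℝ) (hν : ν ≠ 1/2) (φ : Fin 5 → (V →ₗ[ℝ] ℝ)) :
    gact (astar ytp) (G5 φ) ∈ Submodule.span ℝ {T : MultilinearMap ℝ (fun _ : Fin 5 => V) ℝ |
      ∃ (U : MultilinearMap ℝ (fun _ : Fin 3 => V) ℝ) (A : V →ₗ[ℝ] V →ₗ[ℝ] ℝ),
        gact (xi ν) U = U ∧ (∀ x y : V, A x y = - A y x) ∧
        ∀ v : Fin 5 → V,
          T v = fact (astar ytp) (fun v' => U ![v' 0, v' 1, v' 2] * A (v' 3) (v' 4)) v} := by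
  have h2 : (2*ν - 1) ≠ 0 := fun h => hν (by linarith)
  have hcomb : gact (astar ytp) (G5 φ) = (2*ν - 1)⁻¹ • ((2 : ℝ) • (gact (astar ytp) (tensorUS (gact (xi ν) (U3 (φ 0) (φ 2) (φ 1))) (Salt (φ 3) (φ 4)))) - (1 : ℝ) • (gact (astar ytp) (tensorUS (gact (xi ν) (U3 (φ 0) (φ 1) (φ 2))) (Salt (φ 3) (φ 4)))) - (1 : ℝ) • (gact (astar ytp) (tensorUS (gact (xi ν) (U3 (φ 0) (φ 3) (φ 1))) (Salt (φ 2) (φ 4)))) + (1 : ℝ) • (gact (astar ytp) (tensorUS (gact (xi ν) (U3 (φ 0) (φ 2) (φ 3))) (Salt (φ 1) (φ 4))))) := by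
    rw [← key_xi_sa ν φ, inv_smul_smul₀ h2]
  rw [hcomb]
  exact Submodule.smul_mem _ _ (Submodule.add_mem _ (Submodule.sub_mem _ (Submodule.sub_mem _ (Submodule.smul_mem _ _ (Submodule.subset_span (tensor_mem_gen_sa (xi ν) (idem_xi ν) _ _ _ _ _))) (Submodule.smul_mem _ _ (Submodule.subset_span (tensor_mem_gen_sa (xi ν) (idem_xi ν) _ _ _ _ _)))) (Submodule.smul_mem _ _ (Submodule.subset_span (tensor_mem_gen_sa (xi ν) (idem_xi ν) _ _ _ _ _)))) (Submodule.smul_mem _ _ (Submodule.subset_span (tensor_mem_gen_sa (xi ν) (idem_xi ν) _ _ _ _ _))))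
end HKEY

end ALL

/-- For `e = η` or `e = ξ_ν` with `ν ≠ 1/2`, the space `A'(V)` of algebraic
covariant derivative curvature tensors equals the linear span of
`{y_{t'}*(U⊗S) : eU = U, S symmetric bilinear}` and also the linear span of
`{y_{t'}*(U⊗A) : eU = U, A alternating bilinear}`. -/
theorem stmt_16 (V : Type) [AddCommGroup V] [Module ℝ V] [FiniteDimensional ℝ V]
    (e : MonoidAlgebra ℝ (Equiv.Perm (Fin 3)))
    (he : e = eta ∨ ∃ ν : ℝ, ν ≠ 1/2 ∧ e = xi ν) :
    {R : MultilinearMap ℝ (fun _ : Fin 5 => V) ℝ |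
      (∀ u w x y z : V, R ![w, x, y, z, u] = - R ![w, x, z, y, u]) ∧
      (∀ u w x y z : V, R ![w, x, y, z, u] = R ![y, z, w, x, u]) ∧
      (∀ u w x y z : V,
        R ![w, x, y, z, u] + R ![w, y, z, x, u] + R ![w, z, x, y, u] = 0) ∧
      (∀ u w x y z : V,
        R ![w, x, y, z, u] + R ![w, x, z, u, y] + R ![w, x, u, y, z] = 0)} =
    ↑(Submodule.span ℝ {T : MultilinearMap ℝ (fun _ : Fin 5 => V) ℝ |
      ∃ (U : MultilinearMap ℝ (fun _ : Fin 3 => V) ℝ) (S : V →ₗ[ℝ] V →ₗ[ℝ] ℝ),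
        gact e U = U ∧ (∀ x y : V, S x y = S y x) ∧
        ∀ v : Fin 5 → V,
          T v = fact (astar ytp) (fun v' => U ![v' 0, v' 1, v' 2] * S (v' 3) (v' 4)) v}) ∧
    {R : MultilinearMap ℝ (fun _ : Fin 5 => V) ℝ |
      (∀ u w x y z : V, R ![w, x, y, z, u] = - R ![w, x, z, y, u]) ∧
      (∀ u w x y z : V, R ![w, x, y, z, u] = R ![y, z, w, x, u]) ∧
      (∀ u w x y z : V,
        R ![w, x, y, z, u] + R ![w, y, z, x, u] + R ![w, z, x, y, u] = 0) ∧
      (∀ u w x y z : V,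
        R ![w, x, y, z, u] + R ![w, x, z, u, y] + R ![w, x, u, y, z] = 0)} =
    ↑(Submodule.span ℝ {T : MultilinearMap ℝ (fun _ : Fin 5 => V) ℝ |
      ∃ (U : MultilinearMap ℝ (fun _ : Fin 3 => V) ℝ) (A : V →ₗ[ℝ] V →ₗ[ℝ] ℝ),
        gact e U = U ∧ (∀ x y : V, A x y = - A y x) ∧
        ∀ v : Fin 5 → V,
          T v = fact (astar ytp) (fun v' => U ![v' 0, v' 1, v' 2] * A (v' 3) (v' 4)) v}) := by
  have hgen1 : ∀ T ∈ {T : MultilinearMap ℝ (fun _ : Fin 5 => V) ℝ |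
      ∃ (U : MultilinearMap ℝ (fun _ : Fin 3 => V) ℝ) (S : V →ₗ[ℝ] V →ₗ[ℝ] ℝ),
        gact e U = U ∧ (∀ x y : V, S x y = S y x) ∧
        ∀ v : Fin 5 → V,
          T v = fact (astar ytp) (fun v' => U ![v' 0, v' 1, v' 2] * S (v' 3) (v' 4)) v},
      ∃ F : (Fin 5 → V) → ℝ, ∀ v, T v = fact (astar ytp) F v := by
    rintro T ⟨U, S, _, _, hF⟩; exact ⟨_, hF⟩
  have hgen2 : ∀ T ∈ {T : MultilinearMap ℝ (fun _ : Fin 5 => V) ℝ |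
      ∃ (U : MultilinearMap ℝ (fun _ : Fin 3 => V) ℝ) (A : V →ₗ[ℝ] V →ₗ[ℝ] ℝ),
        gact e U = U ∧ (∀ x y : V, A x y = - A y x) ∧
        ∀ v : Fin 5 → V,
          T v = fact (astar ytp) (fun v' => U ![v' 0, v' 1, v' 2] * A (v' 3) (v' 4)) v},
      ∃ F : (Fin 5 → V) → ℝ, ∀ v, T v = fact (astar ytp) F v := by
    rintro T ⟨U, S, _, _, hF⟩; exact ⟨_, hF⟩
  rcases he with rfl | ⟨ν, hν, rfl⟩
  · constructor
    · apply Set.Subset.antisymm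
      · intro R hR; exact A_sub_span _ (fun φ => hkey_eta_ss φ) R hR
      · exact span_sub_A _ hgen1
    · apply Set.Subset.antisymm
      · intro R hR; exact A_sub_span _ (fun φ => hkey_eta_sa φ) R hR
      · exact span_sub_A _ hgen2
  · constructor
    · apply Set.Subset.antisymm
      · intro R hR; exact A_sub_span _ (fun φ => hkey_xi_ss ν hν φ) R hR
      · exact span_sub_A _ hgen1
    · apply Set.Subset.antisymm
      · intro R hR; exact A_sub_span _ (fun φ => hkey_xi_sa ν hν φ) R hR
      · exact span_sub_A _ hgen2
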